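/- In the 1 × m grid (a path on m vertices) with the power contamination rules, a set S ⊆ {1, ..., m} has contamination closure equal to the entire path if and only if 1 ∈ S, m ∈ S, and the complement of S contains no two consecutive integers. Consequently the minimum size of such a set is ⌊m/2⌋ + 1. -/

import Mathlib

/-- The contamination closure on the path `{1, …, m}`: the smallest superset of
`S` closed under the rule that an interior cell `j` (with `1 < j < m`) becomes
contaminated once both its neighbours `j - 1` and `j + 1` are contaminated. -/
inductive PCont (m : ℕ) (S : Set ℕ) : ℕ → Prop where
  | init {j : ℕ} : j ∈ S → PCont m S j
  | spread {j : ℕ} : 1 < j → j < m → PCont m S (j - 1) → PCont m S (j + 1) →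
      PCont m S j

lemma pcont_left {m : ℕ} {S : Set ℕ} {j : ℕ} (h : PCont m S j) (hj : j ≤ 1) :
    j ∈ S := by
  cases h with
  | init h => exact h
  | spread h1 h2 _ _ => omega

lemma pcont_right {m : ℕ} {S : Set ℕ} {j : ℕ} (h : PCont m S j) (hj : m ≤ j) :
    j ∈ S := by
  cases h with
  | init h => exact h
  | spread h1 h2 _ _ => omega

lemma pcont_gap {m : ℕ} {S : Set ℕ} {i : ℕ} (hi : i ∉ S) (hi1 : i + 1 ∉ S)
    {j : ℕ} (h : PCont m S j) : j ∈ S ∨ (j ≠ i ∧ j ≠ i + 1) := by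
  induction h with
  | init h => exact Or.inl h
  | @spread j h1 h2 hl hr ihl ihr =>
    right
    constructor
    · rintro rfl
      rcases ihr with h | h
      · exact hi1 h
      · omega
    · rintro rfl
      have hji : i + 1 - 1 = i := by omega
      rw [hji] at ihl
      rcases ihl with h | h
      · exact hi h
      · omega

lemma pcont_lower {m : ℕ} (hm : 1 ≤ m) (S : Finset ℕ)
    (hS : ↑S ⊆ Set.Icc 1 m) (h1 : 1 ∈ S) (hmS : m ∈ S)
    (hgap : ∀ i ∈ Finset.Icc 1 m \ S, i + 1 ∉ Finset.Icc 1 m \ S) :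
    m / 2 + 1 ≤ S.card := by
  have h0 : (0 : ℕ) ∉ S := by
    intro h
    have := hS h
    simp [Set.mem_Icc] at this
  have hsub : ∀ k ∈ Finset.range (m / 2 + 1),
      (if 2 * k ∈ S then 2 * k else 2 * k + 1) ∈ S := by
    intro k hk
    simp only [Finset.mem_range] at hk
    split_ifs with h
    · exact h
    · rcases Nat.eq_zero_or_pos k with rfl | hk1
      · simpa using h1
      · have h2k : 2 * k ≤ m := by omega
        by_cases hle : 2 * k + 1 ≤ m
        · have hmem : 2 * k ∈ Finset.Icc 1 m \ S := by
            simp only [Finset.mem_sdiff, Finset.mem_Icc]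
            exact ⟨⟨by omega, h2k⟩, h⟩
          have := hgap _ hmem
          simp only [Finset.mem_sdiff, Finset.mem_Icc, not_and, not_not] at this
          exact this ⟨by omega, hle⟩
        · have : m = 2 * k := by omega
          exact absurd (this ▸ hmS) h
  have hinj : ∀ k₁ ∈ Finset.range (m / 2 + 1), ∀ k₂ ∈ Finset.range (m / 2 + 1),
      (if 2 * k₁ ∈ S then 2 * k₁ else 2 * k₁ + 1) =
      (if 2 * k₂ ∈ S then 2 * k₂ else 2 * k₂ + 1) → k₁ = k₂ := by
    intro k₁ _ k₂ _ h
    split_ifs at h <;> omega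
  calc m / 2 + 1 = (Finset.range (m / 2 + 1)).card := by simp
    _ ≤ S.card := Finset.card_le_card_of_injOn _ hsub hinj

theorem stmt_18 (m : ℕ) (hm : 1 ≤ m) :
    (∀ S : Finset ℕ, ↑S ⊆ Set.Icc 1 m →
      ((∀ j ∈ Set.Icc 1 m, PCont m (↑S) j) ↔
        (1 ∈ S ∧ m ∈ S ∧ ∀ i ∈ Finset.Icc 1 m \ S, i + 1 ∉ Finset.Icc 1 m \ S))) ∧
    sInf {c | ∃ S : Finset ℕ, ↑S ⊆ Set.Icc 1 m ∧ S.card = c ∧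
        ∀ j ∈ Set.Icc 1 m, PCont m (↑S) j} = m / 2 + 1 := by
  have key : ∀ S : Finset ℕ, ↑S ⊆ Set.Icc 1 m →
      ((∀ j ∈ Set.Icc 1 m, PCont m (↑S) j) ↔
        (1 ∈ S ∧ m ∈ S ∧ ∀ i ∈ Finset.Icc 1 m \ S, i + 1 ∉ Finset.Icc 1 m \ S)) := by
    intro S hS
    constructor
    · intro H
      refine ⟨?_, ?_, ?_⟩
      · have := H 1 ⟨le_refl 1, hm⟩
        exact pcont_left this (le_refl 1)
      · have := H m ⟨hm, le_refl m⟩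
        exact pcont_right this (le_refl m)
      · intro i hi hi1
        simp only [Finset.mem_sdiff, Finset.mem_Icc] at hi hi1
        have hc := H i ⟨hi.1.1, hi.1.2⟩
        have hiS : i ∉ (↑S : Set ℕ) := by simpa using hi.2
        have hi1S : i + 1 ∉ (↑S : Set ℕ) := by simpa using hi1.2
        rcases pcont_gap hiS hi1S hc with h | h
        · exact hiS h
        · exact h.1 rfl
    · rintro ⟨h1, hmS, hgap⟩ j hj
      simp only [Set.mem_Icc] at hj
      by_cases hjS : j ∈ S
      · exact PCont.init (by simpa using hjS)
      · have hj1 : 1 < j := by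
          rcases Nat.lt_or_ge 1 j with h | h
          · exact h
          · exact absurd (show j = 1 by omega) (by rintro rfl; exact hjS h1)
        have hjm : j < m := by
          rcases Nat.lt_or_ge j m with h | h
          · exact h
          · exact absurd (show j = m by omega) (by rintro rfl; exact hjS hmS)
        have hjmem : j ∈ Finset.Icc 1 m \ S := by
          simp only [Finset.mem_sdiff, Finset.mem_Icc]
          exact ⟨⟨hj.1, hj.2⟩, hjS⟩
        have hl : j - 1 ∈ S := by
          by_contra h
          have : j - 1 ∈ Finset.Icc 1 m \ S := by
            simp only [Finset.mem_sdiff, Finset.mem_Icc]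
            exact ⟨⟨by omega, by omega⟩, h⟩
          have := hgap _ this
          rw [show j - 1 + 1 = j by omega] at this
          exact this hjmem
        have hr : j + 1 ∈ S := by
          have := hgap _ hjmem
          simp only [Finset.mem_sdiff, Finset.mem_Icc, not_and, not_not] at this
          exact this ⟨by omega, by omega⟩
        exact PCont.spread hj1 hjm (PCont.init (by simpa using hl))
          (PCont.init (by simpa using hr))
  refine ⟨key, ?_⟩
  -- the optimal set: odd numbers in [1,m] together with m
  set Sopt : Finset ℕ :=
    (Finset.range ((m + 1) / 2)).image (fun k => 2 * k + 1) ∪ {m} with hSopt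
  have hmemS : ∀ x, x ∈ Sopt ↔ ((∃ k < (m + 1) / 2, 2 * k + 1 = x) ∨ x = m) := by
    intro x
    simp [hSopt, Finset.mem_union, Finset.mem_image, Finset.mem_range]
    exact or_comm
  have hsub : ↑Sopt ⊆ Set.Icc 1 m := by
    intro x hx
    simp only [Finset.mem_coe] at hx
    rw [hmemS] at hx
    rcases hx with ⟨k, hk, rfl⟩ | h2
    · exact ⟨by omega, by omega⟩
    · rw [Set.mem_Icc, h2]; exact ⟨hm, le_rfl⟩
  have h1S : 1 ∈ Sopt := by
    rw [hmemS]
    exact Or.inl ⟨0, by omega, by omega⟩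
  have hmSopt : m ∈ Sopt := by rw [hmemS]; exact Or.inr rfl
  have hgapS : ∀ i ∈ Finset.Icc 1 m \ Sopt, i + 1 ∉ Finset.Icc 1 m \ Sopt := by
    intro i hi hi1
    simp only [Finset.mem_sdiff, Finset.mem_Icc] at hi hi1
    have hieven : i % 2 = 0 := by
      by_contra h
      apply hi.2
      rw [hmemS]
      exact Or.inl ⟨(i - 1) / 2, by omega, by omega⟩
    apply hi1.2
    rw [hmemS]
    exact Or.inl ⟨i / 2, by omega, by omega⟩
  have hcont : ∀ j ∈ Set.Icc 1 m, PCont m (↑Sopt) j :=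
    (key Sopt hsub).mpr ⟨h1S, hmSopt, hgapS⟩
  have hcard : Sopt.card = m / 2 + 1 := by
    have hinj : Function.Injective (fun k => 2 * k + 1) := by
      intro a b h; dsimp only at h; omega
    have himg : ((Finset.range ((m + 1) / 2)).image (fun k => 2 * k + 1)).card
        = (m + 1) / 2 := by
      rw [Finset.card_image_of_injective _ hinj, Finset.card_range]
    rcases Nat.even_or_odd m with he | ho
    · obtain ⟨r, hr⟩ := he
      have hdisj : Disjoint ((Finset.range ((m + 1) / 2)).image (fun k => 2 * k + 1))
          ({m} : Finset ℕ) := by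
        simp only [Finset.disjoint_singleton_right, Finset.mem_image, Finset.mem_range]
        rintro ⟨k, _, hk⟩
        omega
      rw [hSopt, Finset.card_union_of_disjoint hdisj, himg, Finset.card_singleton]
      omega
    · obtain ⟨r, hr⟩ := ho
      have : Sopt = (Finset.range ((m + 1) / 2)).image (fun k => 2 * k + 1) := by
        rw [hSopt, Finset.union_eq_left]
        simp only [Finset.singleton_subset_iff, Finset.mem_image, Finset.mem_range]
        exact ⟨r, by omega, by omega⟩
      rw [this, himg]
      omega
  apply le_antisymm
  · exact Nat.sInf_le ⟨Sopt, hsub, hcard, hcont⟩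
  · refine le_csInf ⟨_, Sopt, hsub, hcard, hcont⟩ ?_
    rintro c ⟨S, hS, rfl, hc⟩
    obtain ⟨h1, hmS, hgap⟩ := (key S hS).mp hc
    exact pcont_lower hm S hS h1 hmS hgap
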